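/- arXiv:2003.07612 — 6 statements merged into one kernel-verified Lean document; each statement's English description precedes it below -/
import Mathlib

section
/- Let g: ℝⁿ → ℝ̄ be proper, ρ-weakly convex, and lower semicontinuous, and μ ∈ (0, ρ⁻¹). Then the gradient of the Moreau envelope g_μ is Lipschitz continuous with constant max{μ⁻¹, ρ/(1 − ρμ)}. -/
noncomputable section
open Filter Metric Set

/-- Euclidean space ℝⁿ. -/
abbrev En (n : ℕ) := EuclideanSpace ℝ (Fin n)

/-- A proper extended-real-valued function: never `⊥` and not identically `⊤`. -/
def ProperFn {n : ℕ} (g : En n → EReal) : Prop := (∀ x, g x ≠ ⊥) ∧ ∃ x, g x ≠ ⊤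

/-- ρ-weak convexity for extended-real-valued functions: `g + (ρ/2)‖·‖²` is convex. -/
def WeaklyConvexE {n : ℕ} (ρ : ℝ) (g : En n → EReal) : Prop :=
  ∀ x y : En n, ∀ t : ℝ, 0 ≤ t → t ≤ 1 →
    g (t • x + (1 - t) • y) + (((ρ / 2) * ‖t • x + (1 - t) • y‖ ^ 2 : ℝ) : EReal)
      ≤ (t : EReal) * (g x + (((ρ / 2) * ‖x‖ ^ 2 : ℝ) : EReal))
        + ((1 - t : ℝ) : EReal) * (g y + (((ρ / 2) * ‖y‖ ^ 2 : ℝ) : EReal))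

/-- m-strong convexity for extended-real-valued functions. -/
def StronglyConvexE {n : ℕ} (m : ℝ) (f : En n → EReal) : Prop :=
  ∀ x y : En n, ∀ t : ℝ, 0 ≤ t → t ≤ 1 →
    f (t • x + (1 - t) • y) + (((m / 2) * (t * (1 - t)) * ‖x - y‖ ^ 2 : ℝ) : EReal)
      ≤ (t : EReal) * f x + ((1 - t : ℝ) : EReal) * f y

/-- ρ-weak convexity, real-valued version: `g + (ρ/2)‖·‖²` is convex. -/
def WeaklyConvexR {n : ℕ} (ρ : ℝ) (g : En n → ℝ) : Prop :=
  ConvexOn ℝ Set.univ (fun x => g x + (ρ / 2) * ‖x‖ ^ 2)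

/-- `v` is a Fréchet subgradient of the extended-real-valued `g` at `x`:
`g y ≥ g x + ⟨v, y - x⟩ + o(‖y - x‖)` as `y → x`. -/
def FSubE {n : ℕ} (g : En n → EReal) (x v : En n) : Prop :=
  ∀ ε : ℝ, 0 < ε → ∀ᶠ y in nhds x,
    g x + ((inner ℝ v (y - x) - ε * ‖y - x‖ : ℝ) : EReal) ≤ g y

/-- `v` is a Fréchet subgradient of the real-valued `g` at `x`. -/
def FSubR {n : ℕ} (g : En n → ℝ) (x v : En n) : Prop :=
  ∀ ε : ℝ, 0 < ε → ∀ᶠ y in nhds x,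
    g x + (inner ℝ v (y - x) : ℝ) - ε * ‖y - x‖ ≤ g y

/-- Moreau envelope of an extended-real-valued function. -/
def moreauE {n : ℕ} (g : En n → EReal) (μ : ℝ) (y : En n) : EReal :=
  ⨅ z, g z + (((1 / (2 * μ)) * ‖z - y‖ ^ 2 : ℝ) : EReal)

/-- Moreau envelope of a real-valued function. -/
def moreauR {n : ℕ} (g : En n → ℝ) (μ : ℝ) (y : En n) : ℝ :=
  ⨅ z, (g z + (1 / (2 * μ)) * ‖z - y‖ ^ 2)

/-- `p` is a proximal point of the extended-real-valued `g` with parameter `μ` at `y`,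
i.e. a minimizer of `z ↦ g z + (1/(2μ))‖z - y‖²`. -/
def IsProxPtE {n : ℕ} (g : En n → EReal) (μ : ℝ) (y p : En n) : Prop :=
  ∀ z, g p + (((1 / (2 * μ)) * ‖p - y‖ ^ 2 : ℝ) : EReal)
      ≤ g z + (((1 / (2 * μ)) * ‖z - y‖ ^ 2 : ℝ) : EReal)

/-- `p` is a proximal point of the real-valued `g` with parameter `μ` at `y`. -/
def IsProxPtR {n : ℕ} (g : En n → ℝ) (μ : ℝ) (y p : En n) : Prop :=
  ∀ z, g p + (1 / (2 * μ)) * ‖p - y‖ ^ 2 ≤ g z + (1 / (2 * μ)) * ‖z - y‖ ^ 2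

/-- `L`-Lipschitz continuity of a real-valued function. -/
def LipschitzR {n : ℕ} (L : ℝ) (g : En n → ℝ) : Prop := ∀ x y, |g x - g y| ≤ L * ‖x - y‖

/-- `L`-Lipschitz continuity of a map between Euclidean spaces. -/
def LipschitzMap {n m : ℕ} (L : ℝ) (f : En n → En m) : Prop :=
  ∀ x y, ‖f x - f y‖ ≤ L * ‖x - y‖


section MoreauAux

lemma moreau_aux_norm_add_smul_sq {n : ℕ} (P Q : En n) (t : ℝ) :
    ‖P + t • Q‖^2 = ‖P‖^2 + 2*t*(inner ℝ P Q : ℝ) + t^2*‖Q‖^2 := by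
  rw [norm_add_sq_real, real_inner_smul_right, norm_smul]
  simp [mul_pow, sq_abs]
  ring

lemma moreau_aux_limit (X Y C : ℝ) (hC : 0 ≤ C)
    (h : ∀ t:ℝ, 0 < t → t < 1 → X ≤ Y + t*C) : X ≤ Y := by
  rcases eq_or_lt_of_le hC with h0 | hC'
  · have := h (1/2) (by norm_num) (by norm_num); rw [← h0] at this; linarith
  · by_contra hx
    push_neg at hx
    set t := min (1/2) ((X - Y)/(2*C)) with htdef
    have ht0 : 0 < t := lt_min (by norm_num) (div_pos (by linarith) (by linarith))
    have ht1 : t < 1 := lt_of_le_of_lt (min_le_left _ _) (by norm_num)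
    have h2 := h t ht0 ht1
    have h3 : t * C ≤ ((X - Y)/(2*C)) * C := mul_le_mul_of_nonneg_right (min_le_right _ _) hC'.le
    have h4 : ((X - Y)/(2*C)) * C = (X - Y)/2 := by field_simp
    linarith

lemma moreau_aux_inner_expand {n : ℕ} (x y u v : En n) :
    ‖v-x‖^2 + ‖u-y‖^2 - ‖u-x‖^2 - ‖v-y‖^2 = 2 * (inner ℝ (x-y) (u-v) : ℝ) := by
  simp only [norm_sub_sq_real, inner_sub_left, inner_sub_right]
  linarith [real_inner_comm v x, real_inner_comm u y, real_inner_comm u x, real_inner_comm v y]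

lemma moreau_aux_prox_real {n : ℕ} (μ : ℝ) (g : En n → EReal) (hproper : ProperFn g)
    (y q : En n) (hq : IsProxPtE g μ y q) : ∃ r : ℝ, g q = (r : EReal) := by
  obtain ⟨hbot, z0, hz0⟩ := hproper
  refine ⟨(g q).toReal, (EReal.coe_toReal ?_ (hbot q)).symm⟩
  intro htop
  have h := hq z0
  have hz : g z0 = ((g z0).toReal : EReal) := (EReal.coe_toReal hz0 (hbot z0)).symm
  rw [htop, hz, ← EReal.coe_add, EReal.top_add_coe] at h
  exact (EReal.coe_lt_top _).not_ge h

/-- Quadratic growth of the prox objective at its minimizer. -/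
lemma moreau_aux_QG {n : ℕ} {ρ μ : ℝ} (hμ : 0 < μ) (hm : ρ ≤ 1/μ) {g : En n → EReal}
    (hwc : WeaklyConvexE ρ g) (x u v : En n) (hu : IsProxPtE g μ x u)
    (a b : ℝ) (ha : g u = (a:EReal)) (hb : g v = (b:EReal)) :
    a + (1/(2*μ))*‖u-x‖^2 + ((1/μ - ρ)/2)*‖v-u‖^2 ≤ b + (1/(2*μ))*‖v-x‖^2 := by
  have hC : 0 ≤ ((1/μ - ρ)/2)*‖v-u‖^2 := mul_nonneg (by linarith) (by positivity)
  refine moreau_aux_limit _ _ _ hC ?_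
  intro t ht ht1
  have h1 := hwc v u t ht.le ht1.le
  have h2 := hu (t • v + (1-t) • u)
  rw [ha] at h2
  rw [ha, hb] at h1
  set w := t • v + (1-t) • u with hwdef
  have h2' : ((a + (1/(2*μ))*‖u-x‖^2 + ((ρ/2)*‖w‖^2 - (1/(2*μ))*‖w-x‖^2) : ℝ) : EReal)
      ≤ g w + (((ρ/2)*‖w‖^2 : ℝ) : EReal) := by
    have step := add_le_add_left h2 ((((ρ/2)*‖w‖^2 - (1/(2*μ))*‖w-x‖^2 : ℝ)) : EReal)
    refine le_trans (le_of_eq ?_) (step.trans (le_of_eq ?_))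
    · norm_cast
    · rw [add_assoc, ← EReal.coe_add]
      congr 1
      norm_cast
      ring
  rw [← EReal.coe_add, ← EReal.coe_add, ← EReal.coe_mul, ← EReal.coe_mul, ← EReal.coe_add] at h1
  have h4 := EReal.coe_le_coe_iff.mp (h2'.trans h1)
  have e1 : w = u + t • (v - u) := by rw [hwdef]; module
  have e2 : w - x = (u - x) + t • (v - u) := by rw [e1]; abel
  have e3 : v = u + (v - u) := by abel
  have e4 : v - x = (u - x) + (v - u) := by abel
  have hw1 : ‖w‖^2 = ‖u‖^2 + 2*t*(inner ℝ u (v-u) : ℝ) + t^2*‖v-u‖^2 := by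
    rw [e1]; exact moreau_aux_norm_add_smul_sq u (v-u) t
  have hw2 : ‖w-x‖^2 = ‖u-x‖^2 + 2*t*(inner ℝ (u-x) (v-u) : ℝ) + t^2*‖v-u‖^2 := by
    rw [e2]; exact moreau_aux_norm_add_smul_sq (u-x) (v-u) t
  have hv1 : ‖v‖^2 = ‖u‖^2 + 2*(inner ℝ u (v-u) : ℝ) + ‖v-u‖^2 := by
    conv_lhs => rw [e3]
    rw [norm_add_sq_real]
  have hv2 : ‖v-x‖^2 = ‖u-x‖^2 + 2*(inner ℝ (u-x) (v-u) : ℝ) + ‖v-u‖^2 := by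
    rw [e4, norm_add_sq_real]
  rw [hw1, hw2, hv1] at h4
  rw [hv2]
  have hμ' : (1:ℝ)/μ = 2 * (1/(2*μ)) := by field_simp
  rw [hμ']
  rw [hμ'] at hm
  nlinarith [h4, mul_pos ht (sub_pos.mpr ht1), sq_nonneg ‖v-u‖, mul_nonneg ht.le (sq_nonneg ‖v-u‖)]

lemma moreau_aux_final {n : ℕ} (ρ μ : ℝ) (hρ : 0 < ρ) (hμ : 0 < μ) (hc : 0 < 1 - ρ*μ)
    (a d : En n) (hkey : (1 - ρ*μ) * ‖d‖^2 ≤ (inner ℝ a d : ℝ)) :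
    (1/μ) * ‖a - d‖ ≤ max μ⁻¹ (ρ / (1 - ρ * μ)) * ‖a‖ := by
  have hcs : (inner ℝ a d : ℝ) ≤ ‖a‖ * ‖d‖ := real_inner_le_norm a d
  have hsq : ‖a - d‖^2 = ‖a‖^2 - 2*(inner ℝ a d : ℝ) + ‖d‖^2 := norm_sub_sq_real a d
  have hna : (0:ℝ) ≤ ‖a‖ := norm_nonneg _
  have hnd : (0:ℝ) ≤ ‖d‖ := norm_nonneg _
  have hnad : (0:ℝ) ≤ ‖a - d‖ := norm_nonneg _
  have hcd : (1 - ρ*μ) * ‖d‖ ≤ ‖a‖ := by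
    rcases eq_or_lt_of_le hnd with h0 | h0
    · rw [← h0]; simp [hna]
    · nlinarith
  rcases le_or_gt (1/2 : ℝ) (1 - ρ*μ) with hhalf | hhalf
  · have h1 : ‖a - d‖ ≤ ‖a‖ := by
      have hsq2 : ‖a - d‖^2 ≤ ‖a‖^2 := by nlinarith [sq_nonneg ‖d‖]
      nlinarith
    calc (1/μ) * ‖a - d‖ ≤ μ⁻¹ * ‖a‖ := by
          rw [one_div]; exact mul_le_mul_of_nonneg_left h1 (by positivity)
      _ ≤ max μ⁻¹ (ρ / (1 - ρ * μ)) * ‖a‖ := mul_le_mul_of_nonneg_right (le_max_left _ _) hna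
  · have h1 : (1 - ρ*μ) * ‖a - d‖ ≤ (ρ*μ) * ‖a‖ := by
      have hsq2 : ((1 - ρ*μ) * ‖a - d‖)^2 ≤ ((ρ*μ) * ‖a‖)^2 := by
        have hA : ((1 - ρ*μ)*‖d‖)^2 ≤ ‖a‖^2 := by nlinarith
        have hB : (2*(ρ*μ) - 1)*((1 - ρ*μ)*‖d‖)^2 ≤ (2*(ρ*μ)-1)*‖a‖^2 :=
          mul_le_mul_of_nonneg_left hA (by linarith)
        have hC2 : 2*(1 - ρ*μ)^2*((1 - ρ*μ) * ‖d‖^2) ≤ 2*(1 - ρ*μ)^2*(inner ℝ a d : ℝ) :=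
          mul_le_mul_of_nonneg_left hkey (by positivity)
        nlinarith [hB, hC2]
      nlinarith [mul_nonneg hc.le hnad, mul_nonneg (mul_nonneg hρ.le hμ.le) hna]
    have h2 : (1/μ) * ‖a - d‖ ≤ (ρ / (1 - ρ*μ)) * ‖a‖ := by
      rw [div_mul_eq_mul_div, div_mul_eq_mul_div, div_le_div_iff₀ hμ hc]
      nlinarith [h1]
    exact h2.trans (mul_le_mul_of_nonneg_right (le_max_right _ _) hna)

end MoreauAux

/-- the gradient `∇g_μ = (id - prox_{μg})/μ` of the Moreau envelope is
Lipschitz continuous with constant `max{μ⁻¹, ρ/(1 - ρμ)}`. -/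
theorem moreau_envelope_gradient_lipschitz {n : ℕ} (ρ μ : ℝ)
    (hρ : 0 < ρ) (hμ : 0 < μ) (hμρ : μ < ρ⁻¹)
    (g : En n → EReal) (hproper : ProperFn g) (hwc : WeaklyConvexE ρ g)
    (hlsc : LowerSemicontinuous g)
    (p : En n → En n) (hp : ∀ y, IsProxPtE g μ y (p y)) :
    LipschitzMap (max μ⁻¹ (ρ / (1 - ρ * μ))) (fun y => (1 / μ) • (y - p y)) := by
  intro x y
  obtain ⟨a, ha⟩ := moreau_aux_prox_real μ g hproper x (p x) (hp x)
  obtain ⟨b, hb⟩ := moreau_aux_prox_real μ g hproper y (p y) (hp y)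
  have hc : 0 < 1 - ρ*μ := by
    have h1 : ρ*μ < ρ*ρ⁻¹ := mul_lt_mul_of_pos_left hμρ hρ
    rw [mul_inv_cancel₀ hρ.ne'] at h1
    linarith
  have hm : ρ ≤ 1/μ := by
    rw [le_div_iff₀ hμ]; linarith
  have I1 := moreau_aux_QG hμ hm hwc x (p x) (p y) (hp x) a b ha hb
  have I2 := moreau_aux_QG hμ hm hwc y (p y) (p x) (hp y) b a hb ha
  have hexp := moreau_aux_inner_expand x y (p x) (p y)
  have hrev2 : ‖p y - p x‖^2 = ‖p x - p y‖^2 := by rw [norm_sub_rev]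
  rw [hrev2] at I1
  have hX : (1/(2*μ))*‖p y - x‖^2 + (1/(2*μ))*‖p x - y‖^2
      = (1/(2*μ))*‖p x - x‖^2 + (1/(2*μ))*‖p y - y‖^2
        + (1/μ)*(inner ℝ (x-y) (p x - p y) : ℝ) := by
    linear_combination (1/(2*μ)) * hexp
  have hfin : (1/μ - ρ) * ‖p x - p y‖^2 ≤ (1/μ) * (inner ℝ (x-y) (p x - p y) : ℝ) := by
    linarith [I1, I2, hX]
  have hkey : (1 - ρ*μ) * ‖p x - p y‖^2 ≤ (inner ℝ (x-y) (p x - p y) : ℝ) := by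
    have e5 : μ * ((1/μ - ρ) * ‖p x - p y‖^2) = (1 - ρ*μ) * ‖p x - p y‖^2 := by
      have hone : μ * (1/μ) = 1 := mul_one_div_cancel hμ.ne'
      linear_combination (‖p x - p y‖^2) * hone
    have e6 : μ * ((1/μ) * (inner ℝ (x-y) (p x - p y) : ℝ)) = (inner ℝ (x-y) (p x - p y) : ℝ) := by
      rw [← mul_assoc, mul_one_div_cancel hμ.ne', one_mul]
    have h7 := mul_le_mul_of_nonneg_left hfin hμ.le
    linarith
  have hrw : (1 / μ) • (x - p x) - (1 / μ) • (y - p y)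
      = (1 / μ) • ((x - y) - (p x - p y)) := by
    rw [← smul_sub]; congr 1; abel
  show ‖(1 / μ) • (x - p x) - (1 / μ) • (y - p y)‖ ≤ _
  rw [hrw, norm_smul, Real.norm_eq_abs, abs_of_pos (by positivity)]
  exact moreau_aux_final ρ μ hρ hμ hc (x - y) (p x - p y) hkey
end
end

section
/- Let g: ℝⁿ → ℝ̄ be proper, closed, and ρ-weakly convex, and let 0 < μ₂ ≤ μ₁ < ρ⁻¹. Then for all y, g_{μ₂}(y) ≤ g_{μ₁}(y) + (1/2)·((μ₁ − μ₂)/μ₂)·μ₁·‖∇g_{μ₁}(y)‖². -/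
noncomputable section
open Filter Metric Set

/-- comparison of Moreau envelopes for two smoothing parameters
`0 < μ₂ ≤ μ₁ < ρ⁻¹`, in terms of `∇g_{μ₁}(y) = (y - prox_{μ₁ g}(y))/μ₁`. -/
theorem moreau_envelope_parameter_comparison {n : ℕ} (ρ μ₁ μ₂ : ℝ)
    (hρ : 0 < ρ) (hμ₂ : 0 < μ₂) (hμ₂₁ : μ₂ ≤ μ₁) (hμ₁ρ : μ₁ < ρ⁻¹)
    (g : En n → EReal) (hproper : ProperFn g) (hlsc : LowerSemicontinuous g)
    (hwc : WeaklyConvexE ρ g)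
    (y p : En n) (hp : IsProxPtE g μ₁ y p) :
    moreauE g μ₂ y ≤
      moreauE g μ₁ y +
        ((1 / 2 * ((μ₁ - μ₂) / μ₂) * μ₁ * ‖(1 / μ₁) • (y - p)‖ ^ 2 : ℝ) : EReal) := by
  have hμ₁ : 0 < μ₁ := lt_of_lt_of_le hμ₂ hμ₂₁
  obtain ⟨hbot, x₀, hx₀⟩ := hproper
  -- g p is finite
  have hpt : g p ≠ ⊤ := by
    intro htop
    have h := hp x₀
    rw [htop] at h
    rw [EReal.top_add_coe, top_le_iff] at h
    exact absurd h (ne_of_lt (EReal.add_lt_top hx₀ (EReal.coe_ne_top _)))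
  obtain ⟨r, hr⟩ : ∃ r : ℝ, g p = (r : ℝ) := ⟨(g p).toReal, (EReal.coe_toReal hpt (hbot p)).symm⟩
  have henv₁ : moreauE g μ₁ y = g p + (((1 / (2 * μ₁)) * ‖p - y‖ ^ 2 : ℝ) : EReal) := by
    apply le_antisymm
    · exact iInf_le _ p
    · exact le_iInf hp
  have henv₂ : moreauE g μ₂ y ≤ g p + (((1 / (2 * μ₂)) * ‖p - y‖ ^ 2 : ℝ) : EReal) :=
    iInf_le _ p
  refine henv₂.trans ?_
  rw [henv₁, hr]
  rw [← EReal.coe_add, ← EReal.coe_add, ← EReal.coe_add, EReal.coe_le_coe_iff]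
  have hnorm : ‖(1 / μ₁) • (y - p)‖ = (1 / μ₁) * ‖p - y‖ := by
    rw [norm_smul, norm_sub_rev, Real.norm_eq_abs, abs_of_pos (by positivity)]
  rw [hnorm]
  have key : (1 / (2 * μ₂)) * ‖p - y‖ ^ 2 =
      (1 / (2 * μ₁)) * ‖p - y‖ ^ 2 +
        1 / 2 * ((μ₁ - μ₂) / μ₂) * μ₁ * ((1 / μ₁) * ‖p - y‖) ^ 2 := by
    field_simp
    ring
  linarith [key]
end
end

section
/- Let g: ℝⁿ → ℝ be proper, closed, ρ-weakly convex and L_g-Lipschitz continuous, and let 0 < μ₂ ≤ μ₁ < ρ⁻¹. Then g_{μ₂}(y) ≤ g_{μ₁}(y) + (1/2)·((μ₁ − μ₂)/μ₂)·μ₁·L_g² for all y. -/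
noncomputable section
open Filter Metric Set

lemma moreau_aux_compare {n : ℕ} (g : En n → ℝ) (Lg a₁ a₂ : ℝ) (y : En n)
    (ha₁ : 0 < a₁) (h12 : a₁ ≤ a₂)
    (hLg : ∀ x z, |g x - g z| ≤ Lg * ‖x - z‖) :
    (⨅ z, g z + a₂ * ‖z - y‖ ^ 2)
      ≤ (⨅ z, g z + a₁ * ‖z - y‖ ^ 2) + (a₂ - a₁) * (Lg ^ 2 / (4 * a₁ ^ 2)) := by
  have ha₂ : 0 < a₂ := lt_of_lt_of_le ha₁ h12
  -- lower bound for the objective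
  have hlb : ∀ c : ℝ, 0 < c → ∀ z, g y - Lg ^ 2 / (4 * c) ≤ g z + c * ‖z - y‖ ^ 2 := by
    intro c hc z
    have h1 : g y - g z ≤ Lg * ‖z - y‖ := by
      calc g y - g z ≤ |g y - g z| := le_abs_self _
        _ ≤ Lg * ‖y - z‖ := hLg y z
        _ = Lg * ‖z - y‖ := by rw [norm_sub_rev]
    have hd : (0:ℝ) ≤ ‖z - y‖ := norm_nonneg _
    have hsq := sq_nonneg (Lg - 2 * c * ‖z - y‖)
    have hc4 : (0:ℝ) < 4 * c := by linarith
    have h2 : g y - (g z + c * ‖z - y‖ ^ 2) ≤ Lg ^ 2 / (4 * c) := by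
      rw [le_div_iff₀ hc4]; nlinarith
    linarith
  have bdd : ∀ c : ℝ, 0 < c → BddBelow (Set.range fun z => g z + c * ‖z - y‖ ^ 2) := by
    intro c hc
    exact ⟨g y - Lg ^ 2 / (4 * c), by rintro _ ⟨z, rfl⟩; exact hlb c hc z⟩
  set m₁ := (⨅ z, g z + a₁ * ‖z - y‖ ^ 2) with hm₁
  set m₂ := (⨅ z, g z + a₂ * ‖z - y‖ ^ 2) with hm₂
  -- key estimate for every small ε
  have key : ∀ ε : ℝ, 0 < ε → ε < 1 →
      m₂ ≤ m₁ + ε ^ 2 + (a₂ - a₁) *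
        ((Lg ^ 2 + 2 * ε * (a₁ * (2 - ε))) / (a₁ * (2 - ε)) ^ 2) := by
    intro ε hε hε1
    have hcpos : 0 < a₁ * (2 - ε) := by nlinarith
    obtain ⟨z, hz⟩ := exists_lt_of_ciInf_lt
      (show m₁ < m₁ + ε ^ 2 by nlinarith)
    set d := ‖z - y‖ with hd
    have hdnn : (0:ℝ) ≤ d := norm_nonneg _
    set w := z + ε • (y - z) with hw
    have hw1 : ‖w - y‖ = (1 - ε) * d := by
      have : w - y = (1 - ε) • (z - y) := by
        rw [hw]; module
      rw [this, norm_smul, Real.norm_eq_abs, abs_of_nonneg (by linarith)]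
    have hw2 : ‖w - z‖ = ε * d := by
      have : w - z = ε • (y - z) := by rw [hw]; abel
      rw [this, norm_smul, Real.norm_eq_abs, abs_of_nonneg hε.le, norm_sub_rev]
    have hfw : m₁ ≤ g w + a₁ * ‖w - y‖ ^ 2 := ciInf_le (bdd a₁ ha₁) w
    have hgw : g w - g z ≤ Lg * (ε * d) := by
      calc g w - g z ≤ |g w - g z| := le_abs_self _
        _ ≤ Lg * ‖w - z‖ := hLg w z
        _ = Lg * (ε * d) := by rw [hw2]
    rw [hw1] at hfw
    -- derive a₁ (2-ε) d² ≤ Lg d + ε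
    have hkey : a₁ * (2 - ε) * d ^ 2 ≤ Lg * d + ε := by nlinarith
    have hq : (a₁ * (2 - ε)) ^ 2 * d ^ 2 ≤ Lg ^ 2 + 2 * ε * (a₁ * (2 - ε)) := by
      have h2 := mul_le_mul_of_nonneg_left hkey hcpos.le
      nlinarith [sq_nonneg (Lg - a₁ * (2 - ε) * d)]
    have hd2 : d ^ 2 ≤ (Lg ^ 2 + 2 * ε * (a₁ * (2 - ε))) / (a₁ * (2 - ε)) ^ 2 := by
      rw [le_div_iff₀ (by positivity)]
      linarith [hq]
    have hm2z : m₂ ≤ g z + a₂ * d ^ 2 := ciInf_le (bdd a₂ ha₂) z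
    have h21 : (0:ℝ) ≤ a₂ - a₁ := by linarith
    calc m₂ ≤ g z + a₂ * d ^ 2 := hm2z
      _ = (g z + a₁ * d ^ 2) + (a₂ - a₁) * d ^ 2 := by ring
      _ ≤ (m₁ + ε ^ 2) + (a₂ - a₁) *
            ((Lg ^ 2 + 2 * ε * (a₁ * (2 - ε))) / (a₁ * (2 - ε)) ^ 2) := by
          gcongr <;> first
            | exact hz.le
            | exact hd2
      _ = _ := by ring
  -- take the limit ε → 0⁺
  set F : ℝ → ℝ := fun ε => m₁ + ε ^ 2 + (a₂ - a₁) *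
        ((Lg ^ 2 + 2 * ε * (a₁ * (2 - ε))) / (a₁ * (2 - ε)) ^ 2) with hF
  have hcont : ContinuousAt F 0 := by
    apply ContinuousAt.add
    · fun_prop
    · apply ContinuousAt.mul continuousAt_const
      apply ContinuousAt.div (by fun_prop) (by fun_prop)
      positivity
  have hF0 : F 0 = m₁ + (a₂ - a₁) * (Lg ^ 2 / (4 * a₁ ^ 2)) := by
    rw [hF]
    have ha₁' : a₁ ≠ 0 := ha₁.ne'
    field_simp
    ring
  have htend : Filter.Tendsto F (nhdsWithin 0 (Set.Ioi 0)) (nhds (F 0)) :=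
    hcont.continuousWithinAt.tendsto
  have hev : ∀ᶠ ε in nhdsWithin (0:ℝ) (Set.Ioi 0), m₂ ≤ F ε := by
    filter_upwards [Ioo_mem_nhdsGT_of_mem (Set.left_mem_Ico.mpr one_pos)] with ε hε
    exact key ε hε.1 hε.2
  have := ge_of_tendsto htend hev
  rw [hF0] at this
  exact this

/-- Lipschitz version of the Moreau envelope comparison:
`g_{μ₂}(y) ≤ g_{μ₁}(y) + (1/2)((μ₁ - μ₂)/μ₂)μ₁ L_g²`. -/
theorem moreau_envelope_parameter_comparison_lipschitz {n : ℕ} (ρ μ₁ μ₂ Lg : ℝ)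
    (hρ : 0 < ρ) (hμ₂ : 0 < μ₂) (hμ₂₁ : μ₂ ≤ μ₁) (hμ₁ρ : μ₁ < ρ⁻¹)
    (g : En n → ℝ) (hlsc : LowerSemicontinuous g) (hwc : WeaklyConvexR ρ g)
    (hLg : LipschitzR Lg g) (y : En n) :
    moreauR g μ₂ y ≤ moreauR g μ₁ y + 1 / 2 * ((μ₁ - μ₂) / μ₂) * μ₁ * Lg ^ 2 := by
  have hμ₁ : 0 < μ₁ := lt_of_lt_of_le hμ₂ hμ₂₁
  have ha₁ : (0:ℝ) < 1 / (2 * μ₁) := by positivity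
  have h12 : 1 / (2 * μ₁) ≤ 1 / (2 * μ₂) := by
    apply one_div_le_one_div_of_le (by linarith) (by linarith)
  have h := moreau_aux_compare g Lg (1 / (2 * μ₁)) (1 / (2 * μ₂)) y ha₁ h12 hLg
  have hconst : (1 / (2 * μ₂) - 1 / (2 * μ₁)) * (Lg ^ 2 / (4 * (1 / (2 * μ₁)) ^ 2))
      = 1 / 2 * ((μ₁ - μ₂) / μ₂) * μ₁ * Lg ^ 2 := by
    field_simp
    ring
  rw [hconst] at h
  exact h
end
end

section
/- Let F = h + g where ∇h is L_{∇h}-Lipschitz and g: ℝᵈ → ℝ̄ is proper, lsc, ρ-weakly convex. For stepsize λ ∈ (0, min{ρ⁻¹/2, L_{∇h}⁻¹}], the proximal gradient step x_{k+1} = prox_{λg}(x_k − λ∇h(x_k)) satisfies F(x_{k+1}) + (1/2)(λ⁻¹ − ρ)‖x_k − x_{k+1}‖² ≤ F(x_k). -/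
noncomputable section
open Filter Metric Set

private theorem descent_lemma {d : ℕ} (L : ℝ) (hL : 0 < L) (h : En d → ℝ) (h' : En d → En d)
    (hgrad : ∀ x, HasGradientAt h (h' x) x) (hhl : LipschitzMap L h') (x y : En d) :
    h y ≤ h x + inner ℝ (h' x) (y - x) + L / 2 * ‖y - x‖ ^ 2 := by
  set u := y - x with hu
  set γ : ℝ → En d := fun t => x + t • u with hγ
  have hderiv : ∀ t : ℝ, HasDerivAt (fun s => h (γ s)) (inner ℝ (h' (γ t)) u : ℝ) t := by
    intro t
    have h1 : HasDerivAt γ u t := by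
      have := ((hasDerivAt_id t).smul_const u).const_add x
      rw [one_smul] at this
      exact this
    have h2 : HasFDerivAt h (InnerProductSpace.toDual ℝ (En d) (h' (γ t))) (γ t) := hgrad (γ t)
    have := h2.comp_hasDerivAt t h1
    simp at this
    exact this
  have hcontγ : Continuous γ := by fun_prop
  have hconth' : Continuous h' := by
    have : LipschitzWith ⟨L, hL.le⟩ h' := by
      apply LipschitzWith.of_dist_le_mul
      intro a b
      rw [dist_eq_norm, dist_eq_norm]; exact hhl a b
    exact this.continuous
  have hcontd : Continuous fun t : ℝ => (inner ℝ (h' (γ t)) u : ℝ) :=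
    (continuous_inner.comp ((hconth'.comp hcontγ).prodMk continuous_const))
  have hint : h (γ 1) - h (γ 0) = ∫ t in (0:ℝ)..1, (inner ℝ (h' (γ t)) u : ℝ) := by
    refine (intervalIntegral.integral_eq_sub_of_hasDerivAt (fun t _ => hderiv t) ?_).symm
    exact (hcontd.intervalIntegrable 0 1)
  have hγ0 : γ 0 = x := by simp [hγ]
  have hγ1 : γ 1 = y := by simp [hγ, hu]
  have hbound : ∫ t in (0:ℝ)..1, (inner ℝ (h' (γ t)) u : ℝ) ≤
      ∫ t in (0:ℝ)..1, (inner ℝ (h' x) u + L * t * ‖u‖ ^ 2 : ℝ) := by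
    apply intervalIntegral.integral_mono_on (by norm_num) (hcontd.intervalIntegrable 0 1)
    · exact ((continuous_const.add (((continuous_const.mul continuous_id).mul
        continuous_const))).intervalIntegrable 0 1)
    · intro t ht
      have h1 : (inner ℝ (h' (γ t)) u : ℝ) - inner ℝ (h' x) u = inner ℝ (h' (γ t) - h' x) u := by
        rw [inner_sub_left]
      have h2 : ‖h' (γ t) - h' x‖ ≤ L * (t * ‖u‖) := by
        have := hhl (γ t) x
        simpa [hγ, norm_smul, abs_of_nonneg ht.1, mul_assoc] using this
      have h3 : (inner ℝ (h' (γ t) - h' x) u : ℝ) ≤ ‖h' (γ t) - h' x‖ * ‖u‖ :=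
        real_inner_le_norm _ _
      nlinarith [norm_nonneg u, norm_nonneg (h' (γ t) - h' x)]
  have hval : ∫ t in (0:ℝ)..1, (inner ℝ (h' x) u + L * t * ‖u‖ ^ 2 : ℝ)
      = inner ℝ (h' x) u + L / 2 * ‖u‖ ^ 2 := by
    have heq : (fun t : ℝ => (inner ℝ (h' x) u + L * t * ‖u‖ ^ 2 : ℝ))
        = fun t : ℝ => (inner ℝ (h' x) u : ℝ) + (L * ‖u‖ ^ 2) * t := by
      ext t; ring
    rw [heq, intervalIntegral.integral_add intervalIntegrable_const
      ((by fun_prop : Continuous fun t : ℝ => (L * ‖u‖ ^ 2) * t).intervalIntegrable 0 1),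
      intervalIntegral.integral_const_mul, integral_id, intervalIntegral.integral_const]
    norm_num; ring
  rw [hγ0, hγ1] at hint
  linarith [hbound, hint, hval.symm ▸ hbound]

private lemma norm_combo_identity {d : ℕ} (x y : En d) (t : ℝ) :
    t * ‖x‖ ^ 2 + (1 - t) * ‖y‖ ^ 2 - ‖t • x + (1 - t) • y‖ ^ 2
      = t * (1 - t) * ‖x - y‖ ^ 2 := by
  have e1 : ‖t • x + (1 - t) • y‖ ^ 2
      = t ^ 2 * ‖x‖ ^ 2 + 2 * (t * (1 - t)) * inner ℝ x y + (1 - t) ^ 2 * ‖y‖ ^ 2 := by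
    rw [@norm_add_sq_real]
    rw [norm_smul, norm_smul, real_inner_smul_left, real_inner_smul_right]
    simp [mul_pow]
    ring_nf
  have e2 : ‖x - y‖ ^ 2 = ‖x‖ ^ 2 - 2 * inner ℝ x y + ‖y‖ ^ 2 := norm_sub_sq_real x y
  rw [e1, e2]; ring

private lemma ne_top_of_add_le {x : EReal} (r s : ℝ)
    (h : x + (r : EReal) ≤ (s : EReal)) : x ≠ ⊤ := by
  intro htop
  rw [htop] at h
  simp [EReal.top_add_coe] at h

/-- sufficient decrease of the proximal gradient step for
`F = h + g` with `g` proper, lsc, ρ-weakly convex and stepsize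
`λ ∈ (0, min{ρ⁻¹/2, L_{∇h}⁻¹}]`. -/
theorem prox_gradient_sufficient_decrease {d : ℕ} (ρ Lnh lam : ℝ)
    (hρ : 0 < ρ) (hLnh : 0 < Lnh)
    (hlam0 : 0 < lam) (hlam : lam ≤ min (ρ⁻¹ / 2) Lnh⁻¹)
    (h : En d → ℝ) (h' : En d → En d) (hgrad : ∀ x, HasGradientAt h (h' x) x)
    (hhl : LipschitzMap Lnh h')
    (g : En d → EReal) (hproper : ProperFn g) (hlsc : LowerSemicontinuous g)
    (hwc : WeaklyConvexE ρ g)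
    (xk xk1 : En d)
    (hstep : ∀ z : En d,
      g xk1 + ((inner ℝ (h' xk) (xk1 - xk) + 1 / (2 * lam) * ‖xk1 - xk‖ ^ 2 : ℝ) : EReal)
        ≤ g z + ((inner ℝ (h' xk) (z - xk) + 1 / (2 * lam) * ‖z - xk‖ ^ 2 : ℝ) : EReal)) :
    ((h xk1 : ℝ) : EReal) + g xk1 +
        ((1 / 2 * (lam⁻¹ - ρ) * ‖xk - xk1‖ ^ 2 : ℝ) : EReal)
      ≤ ((h xk : ℝ) : EReal) + g xk := by
  obtain ⟨hbot, z0, hz0⟩ := hproper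
  set c : ℝ := 1 / (2 * lam) with hc
  set p : ℝ := inner ℝ (h' xk) (xk1 - xk) with hp
  set M : ℝ := ‖xk1 - xk‖ ^ 2 with hM
  have hM0 : 0 ≤ M := sq_nonneg _
  have hlam1 : lam ≤ ρ⁻¹ / 2 := hlam.trans (min_le_left _ _)
  have hlam2 : lam ≤ Lnh⁻¹ := hlam.trans (min_le_right _ _)
  have hcρ : ρ ≤ c := by
    rw [hc, le_div_iff₀ (by positivity)]
    have h1 : ρ * ρ⁻¹ = 1 := mul_inv_cancel₀ hρ.ne'
    nlinarith
  have hcL : Lnh / 2 ≤ c := by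
    rw [hc, le_div_iff₀ (by positivity)]
    have : lam * Lnh ≤ 1 := by
      calc lam * Lnh ≤ Lnh⁻¹ * Lnh := by nlinarith
      _ = 1 := inv_mul_cancel₀ hLnh.ne'
    nlinarith
  -- descent lemma
  have hdesc : h xk1 ≤ h xk + p + c * M := by
    have := descent_lemma Lnh hLnh h h' hgrad hhl xk xk1
    nlinarith
  -- g xk1 is finite
  have hgk1top : g xk1 ≠ ⊤ := by
    have h0 := hstep z0
    rw [← EReal.coe_toReal hz0 (hbot z0), ← EReal.coe_add] at h0
    exact ne_top_of_add_le _ _ h0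
  set b : ℝ := (g xk1).toReal with hbdef
  have hb : ((b : ℝ) : EReal) = g xk1 := EReal.coe_toReal hgk1top (hbot xk1)
  by_cases hgk : g xk = ⊤
  · rw [hgk, EReal.coe_add_top]
    exact le_top
  set a : ℝ := (g xk).toReal with hadef
  have ha : ((a : ℝ) : EReal) = g xk := EReal.coe_toReal hgk (hbot xk)
  -- per-t inequality
  set K : ℝ := (c - ρ / 2) * M with hK
  have hK0 : 0 ≤ K := by
    apply mul_nonneg _ hM0
    nlinarith
  have keyt : ∀ t : ℝ, 0 < t → t ≤ 1 → b + p + (2 * c - ρ / 2) * M ≤ a + t * K := by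
    intro t ht0 ht1
    set z : En d := t • xk + (1 - t) • xk1 with hz
    -- weak convexity
    have hwcz := hwc xk xk1 t ht0.le ht1
    rw [← ha, ← hb, ← EReal.coe_add, ← EReal.coe_add, ← EReal.coe_mul, ← EReal.coe_mul,
      ← EReal.coe_add] at hwcz
    have hgztop : g z ≠ ⊤ := ne_top_of_add_le _ _ hwcz
    set gz : ℝ := (g z).toReal with hgzdef
    have hgz : ((gz : ℝ) : EReal) = g z := EReal.coe_toReal hgztop (hbot z)
    rw [← hgz, ← EReal.coe_add, EReal.coe_le_coe_iff] at hwcz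
    -- prox step at z
    have hsz := hstep z
    rw [← hb, ← hgz, ← EReal.coe_add, ← EReal.coe_add, EReal.coe_le_coe_iff] at hsz
    -- geometry
    have hzxk : z - xk = (1 - t) • (xk1 - xk) := by
      rw [hz]; module
    have hinner : (inner ℝ (h' xk) (z - xk) : ℝ) = (1 - t) * p := by
      rw [hzxk, real_inner_smul_right, hp]
    have hnormz : ‖z - xk‖ ^ 2 = (1 - t) ^ 2 * M := by
      rw [hzxk, norm_smul, mul_pow, hM]
      have : |1 - t| = 1 - t := abs_of_nonneg (by linarith)
      rw [Real.norm_eq_abs, this]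
    have hid : t * ‖xk‖ ^ 2 + (1 - t) * ‖xk1‖ ^ 2 - ‖z‖ ^ 2 = t * (1 - t) * M := by
      rw [hz, norm_combo_identity xk xk1 t, hM, norm_sub_rev]
    rw [hinner, hnormz] at hsz
    -- substitute ‖z‖² in hwcz
    have hznorm : ‖z‖ ^ 2 = t * ‖xk‖ ^ 2 + (1 - t) * ‖xk1‖ ^ 2 - t * (1 - t) * M := by
      linarith
    rw [hznorm] at hwcz
    -- combine: t * LHS ≤ t * RHS
    have hmul : t * (b + p + (2 - t) * (c * M)) ≤ t * (a + ρ / 2 * ((1 - t) * M)) := by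
      linarith [hsz, hwcz]
    have hdiv := (mul_le_mul_iff_right₀ ht0).mp hmul
    rw [hK]
    linarith [hdiv]
  -- limit t → 0
  have key : b + p + (2 * c - ρ / 2) * M ≤ a := by
    by_contra hlt
    push_neg at hlt
    set L : ℝ := b + p + (2 * c - ρ / 2) * M with hL
    set t : ℝ := min 1 ((L - a) / (2 * (K + 1))) with ht
    have ht0 : 0 < t := lt_min one_pos (div_pos (by linarith) (by positivity))
    have ht1 : t ≤ 1 := min_le_left _ _
    have htK : t * K < L - a := by
      calc t * K ≤ (L - a) / (2 * (K + 1)) * K :=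
        mul_le_mul_of_nonneg_right (min_le_right _ _) hK0
      _ < L - a := by
        rw [div_mul_eq_mul_div, div_lt_iff₀ (by positivity)]
        nlinarith
    have := keyt t ht0 ht1
    linarith
  -- final combination
  have hfin : h xk1 + b + 1 / 2 * (lam⁻¹ - ρ) * ‖xk - xk1‖ ^ 2 ≤ h xk + a := by
    have hMrev : ‖xk - xk1‖ ^ 2 = M := by rw [hM, norm_sub_rev]
    have hcoef : 1 / 2 * (lam⁻¹ - ρ) = c - ρ / 2 := by
      rw [hc]; field_simp
    rw [hMrev, hcoef]
    linarith
  calc ((h xk1 : ℝ) : EReal) + g xk1 + ((1 / 2 * (lam⁻¹ - ρ) * ‖xk - xk1‖ ^ 2 : ℝ) : EReal)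
      = ((h xk1 + b + 1 / 2 * (lam⁻¹ - ρ) * ‖xk - xk1‖ ^ 2 : ℝ) : EReal) := by
        rw [← hb, ← EReal.coe_add, ← EReal.coe_add]
    _ ≤ ((h xk + a : ℝ) : EReal) := EReal.coe_le_coe_iff.mpr hfin
    _ = ((h xk : ℝ) : EReal) + g xk := by rw [← ha, ← EReal.coe_add]
end
end

section
/- Under the assumptions of the previous statement and with F* := liminf_k F(x_k) > −∞, the proximal gradient method satisfies min_{2≤j≤k+1} dist(0, ∂(h+g)(x_j)) ≤ k^{−1/2} √(2(F(x_1) − F*)) · (λ⁻¹ + L_{∇h}) / √(λ⁻¹ − ρ) for all k ≥ 1. -/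
noncomputable section
open Filter Metric Set

lemma my_norm_sq_interp {n : ℕ} (u v : En n) (t : ℝ) :
    ‖t • u + (1 - t) • v‖ ^ 2
      = t * ‖u‖ ^ 2 + (1 - t) * ‖v‖ ^ 2 - t * (1 - t) * ‖u - v‖ ^ 2 := by
  have e : ∀ w : En n, ‖w‖ ^ 2 = inner ℝ w w := fun w => (real_inner_self_eq_norm_sq w).symm
  rw [e, e, e, e]
  simp only [inner_add_left, inner_add_right, inner_sub_left, inner_sub_right,
    real_inner_smul_left, real_inner_smul_right, real_inner_comm v u]
  ring

lemma my_norm_sq_split {n : ℕ} (a b : En n) :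
    ‖a + b‖ ^ 2 = ‖a‖ ^ 2 + 2 * inner ℝ a b + ‖b‖ ^ 2 := by
  have e : ∀ w : En n, ‖w‖ ^ 2 = inner ℝ w w := fun w => (real_inner_self_eq_norm_sq w).symm
  rw [e, e, e]
  simp only [inner_add_left, inner_add_right, real_inner_comm b a]
  ring

lemma my_descent {n : ℕ} {L : ℝ} {h : En n → ℝ} {h' : En n → En n}
    (hgrad : ∀ x, HasGradientAt h (h' x) x)
    (hlip : ∀ x y : En n, ‖h' x - h' y‖ ≤ L * ‖x - y‖) (x y : En n) :
    h y ≤ h x + inner ℝ (h' x) (y - x) + L / 2 * ‖y - x‖ ^ 2 := by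
  set v := y - x with hv
  set φ : ℝ → ℝ := fun t =>
    h (x + t • v) - t * inner ℝ (h' x) v - L / 2 * t ^ 2 * ‖v‖ ^ 2 with hφ
  have hline : ∀ t : ℝ, HasDerivAt (fun s : ℝ => x + s • v) v t := by
    intro t
    simpa using ((hasDerivAt_id t).smul_const v).const_add x
  have hcomp : ∀ t : ℝ, HasDerivAt (fun s : ℝ => h (x + s • v))
      (inner ℝ (h' (x + t • v)) v) t := by
    intro t
    have := (hgrad (x + t • v)).hasFDerivAt.comp_hasDerivAt t (hline t)
    exact this
  have hder : ∀ t : ℝ, HasDerivAt φ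
      (inner ℝ (h' (x + t • v)) v - inner ℝ (h' x) v - L * t * ‖v‖ ^ 2) t := by
    intro t
    have h1 : HasDerivAt (fun s : ℝ => s * inner ℝ (h' x) v) (inner ℝ (h' x) v) t := by
      simpa using (hasDerivAt_id t).mul_const (inner ℝ (h' x) v : ℝ)
    have h2' := ((hasDerivAt_pow 2 t).const_mul (L / 2)).mul_const (‖v‖ ^ 2)
    have h2 : HasDerivAt (fun s : ℝ => L / 2 * s ^ 2 * ‖v‖ ^ 2)
        (L * t * ‖v‖ ^ 2) t := by
      refine h2'.congr_deriv ?_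
      simp only [Nat.cast_ofNat, show (2:ℕ) - 1 = 1 from rfl, pow_one]
      ring
    exact ((hcomp t).sub h1).sub h2
  have hdiff : Differentiable ℝ φ := fun t => (hder t).differentiableAt
  have hanti : AntitoneOn φ (Icc (0:ℝ) 1) := by
    apply antitoneOn_of_deriv_nonpos (convex_Icc 0 1) hdiff.continuous.continuousOn
      (fun t _ => (hdiff t).differentiableWithinAt)
    intro t ht
    rw [interior_Icc] at ht
    rw [(hder t).deriv]
    have hb : (inner ℝ (h' (x + t • v) - h' x) v : ℝ) ≤ L * t * ‖v‖ ^ 2 := by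
      calc (inner ℝ (h' (x + t • v) - h' x) v : ℝ) ≤ ‖h' (x + t • v) - h' x‖ * ‖v‖ :=
            real_inner_le_norm _ _
        _ ≤ (L * ‖(x + t • v) - x‖) * ‖v‖ :=
            mul_le_mul_of_nonneg_right (hlip _ _) (norm_nonneg _)
        _ = L * t * ‖v‖ ^ 2 := by
            rw [add_sub_cancel_left, norm_smul, Real.norm_eq_abs, abs_of_pos ht.1]; ring
    have hi : (inner ℝ (h' (x + t • v)) v : ℝ) - inner ℝ (h' x) v
        = inner ℝ (h' (x + t • v) - h' x) v := by rw [inner_sub_left]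
    linarith
  have h01 : φ 1 ≤ φ 0 :=
    hanti (by constructor <;> norm_num) (by constructor <;> norm_num) (by norm_num)
  have e0 : φ 0 = h x := by simp [hφ]
  have e1 : φ 1 = h y - inner ℝ (h' x) v - L / 2 * ‖v‖ ^ 2 := by simp [hφ, hv]
  rw [e0, e1] at h01
  linarith

lemma my_wc_real {n : ℕ} {ρ : ℝ} {g : En n → EReal} (hb : ∀ x, g x ≠ ⊥)
    (hwc : WeaklyConvexE ρ g) {z p : En n} (hz : g z ≠ ⊤) (hp : g p ≠ ⊤)
    {t : ℝ} (ht0 : 0 ≤ t) (ht1 : t ≤ 1) :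
    g (t • z + (1 - t) • p) ≠ ⊤ ∧
      (g (t • z + (1 - t) • p)).toReal + ρ / 2 * ‖t • z + (1 - t) • p‖ ^ 2
        ≤ t * ((g z).toReal + ρ / 2 * ‖z‖ ^ 2)
            + (1 - t) * ((g p).toReal + ρ / 2 * ‖p‖ ^ 2) := by
  have h := hwc z p t ht0 ht1
  rw [← EReal.coe_toReal hz (hb z), ← EReal.coe_toReal hp (hb p)] at h
  rw [← EReal.coe_add, ← EReal.coe_add, ← EReal.coe_mul, ← EReal.coe_mul,
    ← EReal.coe_add] at h
  have hm : g (t • z + (1 - t) • p) ≠ ⊤ := by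
    intro htop
    rw [htop, EReal.top_add_coe] at h
    exact absurd h (not_le.mpr (EReal.coe_lt_top _))
  refine ⟨hm, ?_⟩
  rw [← EReal.coe_toReal hm (hb _), ← EReal.coe_add, EReal.coe_le_coe_iff] at h
  linarith

set_option maxHeartbeats 2000000 in
/-- complexity of the proximal gradient method:
`min_{2≤j≤k+1} dist(0, ∂(h+g)(x_j)) ≤ k^{-1/2} √(2(F(x_1) - F*)) (λ⁻¹ + L_{∇h})/√(λ⁻¹ - ρ)`. -/
theorem prox_gradient_complexity {d : ℕ} (ρ Lnh lam : ℝ)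
    (hρ : 0 < ρ) (hLnh : 0 < Lnh)
    (hlam0 : 0 < lam) (hlam : lam ≤ min (ρ⁻¹ / 2) Lnh⁻¹)
    (h : En d → ℝ) (h' : En d → En d) (hgrad : ∀ x, HasGradientAt h (h' x) x)
    (hhl : LipschitzMap Lnh h')
    (g : En d → EReal) (hproper : ProperFn g) (hlsc : LowerSemicontinuous g)
    (hwc : WeaklyConvexE ρ g)
    (x : ℕ → En d)
    (hstep : ∀ k, 1 ≤ k → ∀ z : En d,
      g (x (k + 1)) +
          ((inner ℝ (h' (x k)) (x (k + 1) - x k) +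
            1 / (2 * lam) * ‖x (k + 1) - x k‖ ^ 2 : ℝ) : EReal)
        ≤ g z +
          ((inner ℝ (h' (x k)) (z - x k) + 1 / (2 * lam) * ‖z - x k‖ ^ 2 : ℝ) : EReal))
    (hx1 : g (x 1) ≠ ⊤)
    (Fstar : ℝ)
    (hFstar : (Fstar : EReal) =
      Filter.liminf (fun k => ((h (x k) : ℝ) : EReal) + g (x k)) Filter.atTop)
    (k : ℕ) (hk : 1 ≤ k) :
    ∃ j, 2 ≤ j ∧ j ≤ k + 1 ∧
      infDist 0 {w | FSubE (fun z => ((h z : ℝ) : EReal) + g z) (x j) w}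
        ≤ (k : ℝ) ^ (-(1 / 2 : ℝ)) *
            Real.sqrt (2 * (h (x 1) + (g (x 1)).toReal - Fstar)) *
            (lam⁻¹ + Lnh) / Real.sqrt (lam⁻¹ - ρ) := by
  have hlam1 : lam ≤ ρ⁻¹ / 2 := le_trans hlam (min_le_left _ _)
  have hlam2 : lam ≤ Lnh⁻¹ := le_trans hlam (min_le_right _ _)
  have hinvpos : 0 < lam⁻¹ := inv_pos.mpr hlam0
  have hLle : Lnh ≤ lam⁻¹ := by
    rw [← inv_inv Lnh]
    exact inv_anti₀ hlam0 hlam2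
  have hρle : 2 * ρ ≤ lam⁻¹ := by
    have h2 : (2 * ρ)⁻¹ = ρ⁻¹ / 2 := by
      rw [mul_inv]; ring
    rw [← inv_inv (2 * ρ)]
    apply inv_anti₀ hlam0
    rw [h2]; exact hlam1
  have hc : 0 < lam⁻¹ - ρ := by linarith
  set c : ℝ := (lam⁻¹ - ρ) / 2 with hcdef
  have hcpos : 0 < c := by rw [hcdef]; linarith
  -- finiteness along the trajectory
  have hfin : ∀ j, 1 ≤ j → g (x j) ≠ ⊤ := by
    intro j hj
    induction j with
    | zero => omega
    | succ m ih =>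
      by_cases hm : 1 ≤ m
      · have hgm := ih hm
        have hs := hstep m hm (x m)
        intro htop
        rw [htop, EReal.top_add_coe] at hs
        exact absurd hs (not_le.mpr (EReal.add_lt_top hgm (EReal.coe_ne_top _)))
      · have hm0 : m = 0 := by omega
        subst hm0
        exact hx1
  have hGeq : ∀ j, 1 ≤ j → g (x j) = (((g (x j)).toReal : ℝ) : EReal) :=
    fun j hj => (EReal.coe_toReal (hfin j hj) (hproper.1 _)).symm
  -- real form of the prox step
  have hstepR : ∀ j, 1 ≤ j → ∀ z : En d, g z ≠ ⊤ →
      (g (x (j+1))).toReal + (inner ℝ (h' (x j)) (x (j+1) - x j)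
          + 1 / (2*lam) * ‖x (j+1) - x j‖ ^ 2)
        ≤ (g z).toReal + (inner ℝ (h' (x j)) (z - x j) + 1 / (2*lam) * ‖z - x j‖ ^ 2) := by
    intro j hj z hz
    have hs := hstep j hj z
    rw [hGeq (j+1) (by omega), ← EReal.coe_add, ← EReal.coe_toReal hz (hproper.1 z),
      ← EReal.coe_add, EReal.coe_le_coe_iff] at hs
    exact hs
  -- strong minimality of the prox step
  have key : ∀ j, 1 ≤ j → ∀ z : En d, g z ≠ ⊤ →
      (g (x (j+1))).toReal + inner ℝ (h' (x j)) (x (j+1) - x j)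
          + 1 / (2*lam) * ‖x (j+1) - x j‖ ^ 2 + c * ‖z - x (j+1)‖ ^ 2
        ≤ (g z).toReal + inner ℝ (h' (x j)) (z - x j) + 1 / (2*lam) * ‖z - x j‖ ^ 2 := by
    intro j hj z hz
    have hgp : g (x (j+1)) ≠ ⊤ := hfin (j+1) (by omega)
    have main : ∀ t : ℝ, 0 < t → t ≤ 1 →
        (g (x (j+1))).toReal + inner ℝ (h' (x j)) (x (j+1) - x j)
            + 1 / (2*lam) * ‖x (j+1) - x j‖ ^ 2 + c * (1 - t) * ‖z - x (j+1)‖ ^ 2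
          ≤ (g z).toReal + inner ℝ (h' (x j)) (z - x j) + 1 / (2*lam) * ‖z - x j‖ ^ 2 := by
      intro t ht0 ht1
      obtain ⟨hmt, hwcr⟩ := my_wc_real hproper.1 hwc hz hgp ht0.le ht1
      have hsr := hstepR j hj (t • z + (1 - t) • x (j+1)) hmt
      have idm : t • z + (1 - t) • x (j+1) - x j
          = t • (z - x j) + (1 - t) • (x (j+1) - x j) := by module
      have id1 : (inner ℝ (h' (x j)) (t • z + (1 - t) • x (j+1) - x j) : ℝ)
          = t * inner ℝ (h' (x j)) (z - x j) + (1 - t) * inner ℝ (h' (x j)) (x (j+1) - x j) := by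
        rw [idm, inner_add_right, real_inner_smul_right, real_inner_smul_right]
      have idzp : z - x j - (x (j+1) - x j) = z - x (j+1) := by module
      have id2 : ‖t • z + (1 - t) • x (j+1) - x j‖ ^ 2
          = t * ‖z - x j‖ ^ 2 + (1 - t) * ‖x (j+1) - x j‖ ^ 2
            - t * (1 - t) * ‖z - x (j+1)‖ ^ 2 := by
        rw [idm, my_norm_sq_interp, idzp]
      have id3 : ‖t • z + (1 - t) • x (j+1)‖ ^ 2
          = t * ‖z‖ ^ 2 + (1 - t) * ‖x (j+1)‖ ^ 2
            - t * (1 - t) * ‖z - x (j+1)‖ ^ 2 := my_norm_sq_interp _ _ _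
      rw [id1, id2] at hsr
      rw [id3] at hwcr
      have hmul : t * ((g (x (j+1))).toReal + inner ℝ (h' (x j)) (x (j+1) - x j)
            + 1 / (2*lam) * ‖x (j+1) - x j‖ ^ 2 + c * (1 - t) * ‖z - x (j+1)‖ ^ 2)
          ≤ t * ((g z).toReal + inner ℝ (h' (x j)) (z - x j)
            + 1 / (2*lam) * ‖z - x j‖ ^ 2) := by
        rw [hcdef]
        ring_nf at hsr hwcr ⊢
        linarith [hsr, hwcr]
      exact le_of_mul_le_mul_left hmul ht0
    have hDnn : (0:ℝ) ≤ ‖z - x (j+1)‖ ^ 2 := sq_nonneg _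
    have hlim : ∀ ε : ℝ, 0 < ε →
        (g (x (j+1))).toReal + inner ℝ (h' (x j)) (x (j+1) - x j)
            + 1 / (2*lam) * ‖x (j+1) - x j‖ ^ 2 + c * ‖z - x (j+1)‖ ^ 2
          ≤ ((g z).toReal + inner ℝ (h' (x j)) (z - x j)
            + 1 / (2*lam) * ‖z - x j‖ ^ 2) + ε := by
      intro ε hε
      have hden : (0:ℝ) < c * ‖z - x (j+1)‖ ^ 2 + 1 := by positivity
      set t : ℝ := min 1 (ε / (c * ‖z - x (j+1)‖ ^ 2 + 1)) with htdef
      have htpos : 0 < t := lt_min one_pos (by positivity)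
      have hle := main t htpos (min_le_left _ _)
      have htb : t ≤ ε / (c * ‖z - x (j+1)‖ ^ 2 + 1) := min_le_right _ _
      have hsmall : c * t * ‖z - x (j+1)‖ ^ 2 ≤ ε := by
        have h1 : t * (c * ‖z - x (j+1)‖ ^ 2 + 1) ≤ ε := by
          rw [← le_div_iff₀ hden]; exact htb
        nlinarith [htpos.le, hcpos.le, hDnn]
      nlinarith [hle]
    have := le_of_forall_pos_le_add (fun ε hε => hlim ε hε)
    linarith [this]
  -- sufficient decrease
  have hdec : ∀ j, 1 ≤ j →
      (h (x (j+1)) + (g (x (j+1))).toReal) + c * ‖x (j+1) - x j‖ ^ 2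
        ≤ h (x j) + (g (x j)).toReal := by
    intro j hj
    have hkey := key j hj (x j) (hfin j hj)
    rw [norm_sub_rev (x j) (x (j+1))] at hkey
    simp only [sub_self, inner_zero_right, norm_zero, zero_pow, mul_zero, add_zero,
      OfNat.ofNat_ne_zero, ne_eq, not_false_iff] at hkey
    have hdes := my_descent hgrad hhl (x j) (x (j+1))
    have hL2 : Lnh / 2 * ‖x (j+1) - x j‖ ^ 2 ≤ 1 / (2*lam) * ‖x (j+1) - x j‖ ^ 2 := by
      apply mul_le_mul_of_nonneg_right _ (sq_nonneg _)
      have e : 1 / (2*lam) = lam⁻¹ / 2 := by rw [one_div, mul_inv]; ring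
      rw [e]; linarith
    linarith [hkey, hdes, hL2]
  -- monotonicity
  have hmono : ∀ j, 1 ≤ j → ∀ m, j ≤ m →
      h (x m) + (g (x m)).toReal ≤ h (x j) + (g (x j)).toReal := by
    intro j hj m hm
    induction m with
    | zero => omega
    | succ i ih =>
      rcases Nat.lt_or_ge j (i+1) with hlt | hge
      · have hji : j ≤ i := by omega
        have h1i : 1 ≤ i := by omega
        have := hdec i h1i
        have hnn : 0 ≤ c * ‖x (i+1) - x i‖ ^ 2 := by positivity
        linarith [ih hji]
      · have : j = i + 1 := by omega
        subst this
        exact le_refl _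
  -- Fstar lower bound
  have hFstarle : ∀ j, 1 ≤ j → Fstar ≤ h (x j) + (g (x j)).toReal := by
    intro j hj
    have hfreq : ∃ᶠ m in atTop, ((h (x m) : ℝ) : EReal) + g (x m)
        ≤ ((h (x j) + (g (x j)).toReal : ℝ) : EReal) := by
      refine (eventually_atTop.mpr ⟨j, fun m hm => ?_⟩).frequently
      rw [hGeq m (le_trans hj hm), ← EReal.coe_add, EReal.coe_le_coe_iff]
      exact hmono j hj m hm
    have hll := liminf_le_of_frequently_le hfreq
    rw [← hFstar] at hll
    exact EReal.coe_le_coe_iff.mp hll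
  -- subgradient bound
  have hsub : ∀ j, 1 ≤ j →
      infDist 0 {w | FSubE (fun z => ((h z : ℝ) : EReal) + g z) (x (j+1)) w}
        ≤ (lam⁻¹ + Lnh) * ‖x (j+1) - x j‖ := by
    intro j hj
    have hgp : g (x (j+1)) ≠ ⊤ := hfin (j+1) (by omega)
    have hmem : FSubE (fun z => ((h z : ℝ) : EReal) + g z) (x (j+1))
        (lam⁻¹ • (x j - x (j+1)) + (h' (x (j+1)) - h' (x j))) := by
      intro ε hε
      have hlo := (hasGradientAt_iff_isLittleO.mp (hgrad (x (j+1)))).def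
        (show (0:ℝ) < ε/2 by linarith)
      have hball : ∀ᶠ y in nhds (x (j+1)), ‖y - x (j+1)‖ < lam * ε := by
        filter_upwards [Metric.ball_mem_nhds (x (j+1)) (show 0 < lam*ε by positivity)]
          with y hy
        rw [mem_ball, dist_eq_norm] at hy
        exact hy
      filter_upwards [hlo, hball] with y h1 h2
      by_cases hgy : g y = ⊤
      · simp only [hgy, EReal.coe_add_top]
        exact le_top
      · -- real case
        have hky := key j hj y hgy
        -- expansions
        have e1 : y - x j = (y - x (j+1)) + (x (j+1) - x j) := by module
        have e2 : (inner ℝ (h' (x j)) (y - x j) : ℝ)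
            = inner ℝ (h' (x j)) (y - x (j+1)) + inner ℝ (h' (x j)) (x (j+1) - x j) := by
          rw [e1, inner_add_right]
        have e3 : ‖y - x j‖ ^ 2 = ‖y - x (j+1)‖ ^ 2
            + 2 * inner ℝ (y - x (j+1)) (x (j+1) - x j) + ‖x (j+1) - x j‖ ^ 2 := by
          rw [e1, my_norm_sq_split]
        have e3' : 1 / (2*lam) * ‖y - x j‖ ^ 2
            = 1 / (2*lam) * ‖y - x (j+1)‖ ^ 2
              + lam⁻¹ * inner ℝ (y - x (j+1)) (x (j+1) - x j)
              + 1 / (2*lam) * ‖x (j+1) - x j‖ ^ 2 := by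
          rw [e3]; ring
        have e45 : (inner ℝ (lam⁻¹ • (x j - x (j+1)) + (h' (x (j+1)) - h' (x j)))
              (y - x (j+1)) : ℝ)
            = - (lam⁻¹ * inner ℝ (y - x (j+1)) (x (j+1) - x j))
              + inner ℝ (h' (x (j+1))) (y - x (j+1)) - inner ℝ (h' (x j)) (y - x (j+1)) := by
          rw [inner_add_left, inner_sub_left, real_inner_smul_left,
            show x j - x (j+1) = -(x (j+1) - x j) from by module, inner_neg_left,
            real_inner_comm (x (j+1) - x j) (y - x (j+1))]
          ring
        have habs : |h y - h (x (j+1)) - inner ℝ (h' (x (j+1))) (y - x (j+1))|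
            ≤ ε/2 * ‖y - x (j+1)‖ := by
          have h1' := h1
          rwa [Real.norm_eq_abs] at h1'
        have hq : 1 / (2*lam) * ‖y - x (j+1)‖ ^ 2 ≤ ε/2 * ‖y - x (j+1)‖ := by
          have hnn : (0:ℝ) ≤ ‖y - x (j+1)‖ := norm_nonneg _
          have key2 : ‖y - x (j+1)‖ * ‖y - x (j+1)‖ ≤ (lam*ε) * ‖y - x (j+1)‖ :=
            mul_le_mul_of_nonneg_right h2.le hnn
          calc 1 / (2*lam) * ‖y - x (j+1)‖ ^ 2
              = 1 / (2*lam) * (‖y - x (j+1)‖ * ‖y - x (j+1)‖) := by ring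
            _ ≤ 1 / (2*lam) * ((lam*ε) * ‖y - x (j+1)‖) :=
                mul_le_mul_of_nonneg_left key2 (by positivity)
            _ = ε/2 * ‖y - x (j+1)‖ := by
                field_simp
        have hcnn : 0 ≤ c * ‖y - x (j+1)‖ ^ 2 := by positivity
        -- reduce EReal goal to real
        rw [hGeq (j+1) (by omega), ← EReal.coe_toReal hgy (hproper.1 y),
          ← EReal.coe_add, ← EReal.coe_add, ← EReal.coe_add, EReal.coe_le_coe_iff]
        have habs' := abs_le.mp habs
        linarith [hky, habs'.1, habs'.2, e2, e3', e45, hq, hcnn]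
    have hd := infDist_le_dist_of_mem (x := (0 : En d))
      (show (lam⁻¹ • (x j - x (j+1)) + (h' (x (j+1)) - h' (x j))) ∈ {w | FSubE (fun z => ((h z : ℝ) : EReal) + g z) (x (j+1)) w} from hmem)
    rw [dist_zero_left] at hd
    refine le_trans hd ?_
    calc ‖lam⁻¹ • (x j - x (j+1)) + (h' (x (j+1)) - h' (x j))‖
        ≤ ‖lam⁻¹ • (x j - x (j+1))‖ + ‖h' (x (j+1)) - h' (x j)‖ := norm_add_le _ _
      _ ≤ lam⁻¹ * ‖x (j+1) - x j‖ + Lnh * ‖x (j+1) - x j‖ := by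
          have h1 : ‖lam⁻¹ • (x j - x (j+1))‖ = lam⁻¹ * ‖x (j+1) - x j‖ := by
            rw [norm_smul, Real.norm_eq_abs, abs_of_pos hinvpos, norm_sub_rev]
          have h2 := hhl (x (j+1)) (x j)
          linarith
      _ = (lam⁻¹ + Lnh) * ‖x (j+1) - x j‖ := by ring
  -- summation
  have hsum : ∀ m : ℕ, ∑ j ∈ Finset.Icc 1 m, c * ‖x (j+1) - x j‖ ^ 2
      ≤ (h (x 1) + (g (x 1)).toReal) - (h (x (m+1)) + (g (x (m+1))).toReal) := by
    intro m
    induction m with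
    | zero => simp
    | succ i ih =>
      rw [Finset.sum_Icc_succ_top (by omega : 1 ≤ i + 1)]
      have := hdec (i+1) (by omega)
      linarith
  have hS0 : Fstar ≤ h (x 1) + (g (x 1)).toReal := hFstarle 1 le_rfl
  have hkpos : (0:ℝ) < (k:ℝ) := by exact_mod_cast hk
  have hsumk : ∑ j ∈ Finset.Icc 1 k, c * ‖x (j+1) - x j‖ ^ 2
      ≤ (h (x 1) + (g (x 1)).toReal) - Fstar := by
    have := hFstarle (k+1) (by omega)
    linarith [hsum k]
  set S : ℝ := h (x 1) + (g (x 1)).toReal - Fstar with hSdef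
  have hSnn : 0 ≤ S := by rw [hSdef]; linarith
  obtain ⟨j0, hj0mem, hj0⟩ := Finset.exists_le_of_sum_le
    (s := Finset.Icc 1 k) (f := fun j => c * ‖x (j+1) - x j‖ ^ 2)
    (g := fun _ => S / k) ⟨1, Finset.mem_Icc.mpr ⟨le_rfl, hk⟩⟩ (by
      rw [Finset.sum_const, Nat.card_Icc, nsmul_eq_mul]
      have hcard : (↑(k + 1 - 1) : ℝ) = (k : ℝ) := by
        norm_num
      rw [hcard]
      have : (k:ℝ) * (S / k) = S := by field_simp
      rw [this]
      exact hsumk)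
  rw [Finset.mem_Icc] at hj0mem
  refine ⟨j0 + 1, by omega, by omega, ?_⟩
  have hbound := hsub j0 hj0mem.1
  refine le_trans hbound ?_
  have hnrm2 : ‖x (j0+1) - x j0‖ ^ 2 ≤ S / (k * c) := by
    rw [le_div_iff₀ (by positivity)]
    have hmulk := mul_le_mul_of_nonneg_right hj0 hkpos.le
    have : S / k * k = S := by field_simp
    nlinarith [hmulk]
  have hnrm : ‖x (j0+1) - x j0‖ ≤ Real.sqrt (S / (k * c)) := by
    rw [← Real.sqrt_sq (norm_nonneg (x (j0+1) - x j0))]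
    exact Real.sqrt_le_sqrt hnrm2
  have hsqrtc : 0 < Real.sqrt (lam⁻¹ - ρ) := Real.sqrt_pos.mpr hc
  have hsqrtk : 0 < Real.sqrt (k:ℝ) := Real.sqrt_pos.mpr hkpos
  have hEq : Real.sqrt (S / (k * c))
      = Real.sqrt (2*S) / (Real.sqrt (lam⁻¹ - ρ) * Real.sqrt (k:ℝ)) := by
    rw [show S / ((k:ℝ) * c) = (2*S) / ((lam⁻¹ - ρ) * (k:ℝ)) from by
      rw [hcdef]; field_simp]
    rw [Real.sqrt_div (by linarith : (0:ℝ) ≤ 2*S),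
      Real.sqrt_mul (le_of_lt hc)]
  have hrpow : (k:ℝ) ^ (-(1/2 : ℝ)) = (Real.sqrt (k:ℝ))⁻¹ := by
    rw [Real.rpow_neg (Nat.cast_nonneg k), Real.sqrt_eq_rpow]
  calc (lam⁻¹ + Lnh) * ‖x (j0+1) - x j0‖
      ≤ (lam⁻¹ + Lnh) * (Real.sqrt (2*S) / (Real.sqrt (lam⁻¹ - ρ) * Real.sqrt (k:ℝ))) := by
        apply mul_le_mul_of_nonneg_left _ (by positivity)
        rw [← hEq]; exact hnrm
    _ = (k : ℝ) ^ (-(1 / 2 : ℝ)) * Real.sqrt (2 * S) * (lam⁻¹ + Lnh)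
          / Real.sqrt (lam⁻¹ - ρ) := by
        rw [hrpow]
        field_simp
end
end

section
/- The minimax concave penalty r_{λ,θ}: ℝ → ℝ defined by r_{λ,θ}(x) = λ|x| − x²/(2θ) for |x| ≤ θλ and r_{λ,θ}(x) = θλ²/2 otherwise (λ, θ > 0) is θ⁻¹-weakly convex, i.e., x ↦ r_{λ,θ}(x) + x²/(2θ) is convex; moreover for 0 < γ < θ its proximal operator is prox_{γ r_{λ,θ}}(x) = 0 if |x| < γλ, (x − λγ·sgn(x))/(1 − γ/θ) if γλ ≤ |x| ≤ θλ, and x if |x| > θλ. -/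
noncomputable section
open Filter Metric Set

/-- The minimax concave penalty (MCP). -/
def mcp (lam θ : ℝ) (x : ℝ) : ℝ :=
  if |x| ≤ θ * lam then lam * |x| - x ^ 2 / (2 * θ) else θ * lam ^ 2 / 2

/-- The firm-thresholding formula, claimed to be `prox_{γ r_{λ,θ}}`. -/
def mcpProx (lam θ γ : ℝ) (x : ℝ) : ℝ :=
  if |x| < γ * lam then 0
  else if |x| ≤ θ * lam then (x - lam * γ * Real.sign x) / (1 - γ / θ)
  else x

lemma maxsq_convex (a b : ℝ) : ConvexOn ℝ Set.univ (fun x : ℝ => max (b*x - a) 0 ^ 2) := by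
  refine ⟨convex_univ, ?_⟩
  intro x _ y _ t s ht hs hts
  simp only [smul_eq_mul]
  set mx := max (b*x - a) 0 with hmx
  set my := max (b*y - a) 0 with hmy
  have hmx0 : 0 ≤ mx := le_max_right _ _
  have hmy0 : 0 ≤ my := le_max_right _ _
  have hmxx : b*x - a ≤ mx := le_max_left _ _
  have hmyy : b*y - a ≤ my := le_max_left _ _
  have ha : a*t + a*s = a := by rw [← mul_add, hts, mul_one]
  have hm : max (b*(t*x+s*y) - a) 0 ≤ t*mx + s*my := by
    apply max_le
    · nlinarith [ha, mul_le_mul_of_nonneg_left hmxx ht, mul_le_mul_of_nonneg_left hmyy hs]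
    · positivity
  have hm0 : 0 ≤ max (b*(t*x+s*y) - a) 0 := le_max_right _ _
  nlinarith [mul_nonneg (mul_nonneg ht hs) (sq_nonneg (mx - my)),
    mul_self_le_mul_self hm0 hm, sq_nonneg (t*mx + s*my)]

lemma mcp_eq (lam θ : ℝ) (hlam : 0 < lam) (hθ : 0 < θ) :
    (fun x => mcp lam θ x + x^2/(2*θ)) =
    fun x : ℝ => lam * |x| + (1/(2*θ)) * max (1*x - θ*lam) 0 ^2 + (1/(2*θ)) * max ((-1)*x - θ*lam) 0 ^2 := by
  funext x
  rcases le_or_gt (|x|) (θ*lam) with h|h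
  · obtain ⟨h1, h2⟩ := abs_le.1 h
    rw [mcp, if_pos h, max_eq_right (by linarith), max_eq_right (by linarith)]
    ring
  · rcases lt_abs.1 h with h1 | h1
    · rw [mcp, if_neg (not_le.2 h), abs_of_pos (by nlinarith),
        max_eq_left (by linarith), max_eq_right (by nlinarith)]
      field_simp
      ring
    · rw [mcp, if_neg (not_le.2 h), abs_of_neg (by nlinarith),
        max_eq_right (by nlinarith), max_eq_left (by linarith)]
      field_simp
      ring

lemma mcp_convex (lam θ : ℝ) (hlam : 0 < lam) (hθ : 0 < θ) :
    ConvexOn ℝ Set.univ (fun x => mcp lam θ x + x ^ 2 / (2 * θ)) := by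
  rw [mcp_eq lam θ hlam hθ]
  have h1 : ConvexOn ℝ Set.univ (fun x : ℝ => lam * |x|) := by
    simpa using (convexOn_univ_norm (E := ℝ)).smul hlam.le
  have h2 := (maxsq_convex (θ*lam) 1).smul (c := 1/(2*θ)) (by positivity)
  have h3 := (maxsq_convex (θ*lam) (-1)).smul (c := 1/(2*θ)) (by positivity)
  simp only [smul_eq_mul] at h2 h3
  exact (h1.add h2).add h3

set_option maxHeartbeats 2000000 in
lemma mcp_prox_min_nonneg (lam θ γ x : ℝ) (hlam : 0 < lam) (hθ : 0 < θ)
    (hγ : 0 < γ) (hγθ : γ < θ) (hx : 0 ≤ x) (z : ℝ) :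
    mcp lam θ (mcpProx lam θ γ x) + 1 / (2 * γ) * (mcpProx lam θ γ x - x) ^ 2
      ≤ mcp lam θ z + 1 / (2 * γ) * (z - x) ^ 2 := by
  have habs : |x| = x := abs_of_nonneg hx
  have hz1 : z ≤ |z| := le_abs_self z
  have hz2 : -|z| ≤ z := neg_abs_le z
  have hz3 : |z| ^ 2 = z ^ 2 := sq_abs z
  have hz0 : 0 ≤ |z| := abs_nonneg z
  have hγ0 : γ ≠ 0 := hγ.ne'
  have hθ0 : θ ≠ 0 := hθ.ne'
  have hθγ0 : θ - γ ≠ 0 := (sub_pos.2 hγθ).ne'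
  rcases lt_or_ge x (γ*lam) with hc1 | hc1
  · -- p = 0
    have hp : mcpProx lam θ γ x = 0 := by rw [mcpProx, habs, if_pos hc1]
    have h0 : mcp lam θ 0 = 0 := by
      have h : |(0:ℝ)| ≤ θ*lam := by rw [abs_zero]; positivity
      rw [mcp, if_pos h]; simp
    rw [hp, h0, ← sub_nonneg]
    rcases le_or_gt (|z|) (θ*lam) with hzc | hzc
    · rw [mcp, if_pos hzc]
      have h : lam * |z| - z ^ 2 / (2 * θ) + 1 / (2 * γ) * (z - x) ^ 2 - (0 + 1 / (2 * γ) * (0 - x) ^ 2)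
          = (2*θ*γ*lam*|z| + (θ - γ)*z^2 - 2*θ*z*x) / (2*θ*γ) := by
        field_simp; ring
      rw [h]
      apply div_nonneg _ (by positivity)
      nlinarith [mul_nonneg (mul_nonneg hθ.le hx) (sub_nonneg.2 hz1),
        mul_nonneg (mul_nonneg hθ.le hz0) (sub_pos.2 hc1).le,
        mul_nonneg (sub_pos.2 hγθ).le (sq_nonneg z)]
    · rw [mcp, if_neg (not_le.2 hzc)]
      have h : θ * lam ^ 2 / 2 + 1 / (2 * γ) * (z - x) ^ 2 - (0 + 1 / (2 * γ) * (0 - x) ^ 2)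
          = (θ*γ*lam^2 + z^2 - 2*z*x) / (2*γ) := by
        field_simp; ring
      rw [h]
      apply div_nonneg _ (by positivity)
      nlinarith [mul_nonneg hx (sub_nonneg.2 hz1),
        mul_nonneg hz0 (sub_pos.2 hc1).le,
        sq_nonneg (|z| - γ*lam),
        mul_pos (mul_pos hγ (sub_pos.2 hγθ)) (mul_pos hlam hlam)]
  · rcases le_or_gt x (θ*lam) with hc2 | hc2
    · -- middle regime
      have hsign : Real.sign x = 1 := Real.sign_of_pos (lt_of_lt_of_le (by positivity) hc1)
      have hp : mcpProx lam θ γ x = θ*(x - γ*lam)/(θ - γ) := by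
        rw [mcpProx, habs, if_neg (not_lt.2 hc1), if_pos hc2, hsign]
        field_simp
      obtain ⟨p, hpdef⟩ : ∃ p : ℝ, p = θ*(x - γ*lam)/(θ - γ) := ⟨_, rfl⟩
      rw [← hpdef] at hp
      have hpr : p * (θ - γ) = θ*(x - γ*lam) := by
        rw [hpdef]; field_simp
      have hp0 : 0 ≤ p := by
        rw [hpdef]; apply div_nonneg (by nlinarith) (sub_pos.2 hγθ).le
      have hpθ : p ≤ θ*lam := by
        rw [hpdef, div_le_iff₀ (sub_pos.2 hγθ)]
        nlinarith
      have hmcp_p : mcp lam θ p = lam*p - p^2/(2*θ) := by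
        rw [mcp, if_pos (by rw [abs_of_nonneg hp0]; exact hpθ), abs_of_nonneg hp0]
      rw [hp, hmcp_p, ← sub_nonneg]
      rcases le_or_gt (|z|) (θ*lam) with hzc | hzc
      · rw [mcp, if_pos hzc]
        have h : lam * |z| - z ^ 2 / (2 * θ) + 1 / (2 * γ) * (z - x) ^ 2
            - (lam*p - p^2/(2*θ) + 1 / (2 * γ) * (p - x) ^ 2)
            = (2*θ*γ*lam*(|z| - z) + (θ - γ)*(z - p)^2 + 2*(p*(θ-γ) - θ*(x - γ*lam))*(z - p)) / (2*θ*γ) := by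
          field_simp; ring
        rw [h, hpr, sub_self, mul_zero, zero_mul, add_zero]
        apply div_nonneg _ (by positivity)
        have ha : (0:ℝ) ≤ 2*θ*γ*lam*(|z| - z) := by
          have : (0:ℝ) ≤ |z| - z := by linarith
          positivity
        nlinarith [ha, mul_nonneg (sub_pos.2 hγθ).le (sq_nonneg (z - p))]
      · rw [mcp, if_neg (not_le.2 hzc)]
        -- chain through z0 = θ*lam
        have hsq : (θ*lam - x)^2 ≤ (z - x)^2 := by
          rcases le_or_gt 0 z with h|h
          · rw [abs_of_nonneg h] at hzc
            nlinarith [mul_nonneg (show (0:ℝ) ≤ z - θ*lam by linarith)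
              (show (0:ℝ) ≤ z + θ*lam - 2*x by linarith)]
          · rw [abs_of_neg h] at hzc
            nlinarith [mul_nonneg (show (0:ℝ) ≤ θ*lam - z by linarith)
              (show (0:ℝ) ≤ 2*x - z - θ*lam by linarith)]
        have hstep : lam*p - p^2/(2*θ) + 1 / (2 * γ) * (p - x) ^ 2
            ≤ θ * lam ^ 2 / 2 + 1 / (2 * γ) * (θ*lam - x) ^ 2 := by
          rw [← sub_nonneg]
          have h : θ * lam ^ 2 / 2 + 1 / (2 * γ) * (θ*lam - x) ^ 2
              - (lam*p - p^2/(2*θ) + 1 / (2 * γ) * (p - x) ^ 2)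
              = ((θ - γ)*(θ*lam - p)^2 + 2*(p*(θ-γ) - θ*(x - γ*lam))*(θ*lam - p)) / (2*θ*γ) := by
            field_simp; ring
          rw [h, hpr, sub_self, mul_zero, zero_mul, add_zero]
          apply div_nonneg _ (by positivity)
          exact mul_nonneg (sub_pos.2 hγθ).le (sq_nonneg _)
        have := mul_le_mul_of_nonneg_left hsq (by positivity : (0:ℝ) ≤ 1/(2*γ))
        linarith
    · -- x > θ*lam : p = x
      have hp : mcpProx lam θ γ x = x := by
        rw [mcpProx, habs, if_neg (by push_neg; linarith), if_neg (not_le.2 hc2)]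
      have hmcp_x : mcp lam θ x = θ * lam ^ 2 / 2 := by
        rw [mcp, habs, if_neg (not_le.2 hc2)]
      rw [hp, hmcp_x, sub_self]
      rcases le_or_gt (|z|) (θ*lam) with hzc | hzc
      · rw [mcp, if_pos hzc]
        have hsq : (|z| - x)^2 ≤ (z - x)^2 := by nlinarith
        rw [← sub_nonneg]
        have h : lam * |z| - z ^ 2 / (2 * θ) + 1 / (2 * γ) * (z - x) ^ 2
            - (θ * lam ^ 2 / 2 + 1 / (2 * γ) * 0 ^ 2)
            = ((2*θ*γ*lam*|z| - γ*z^2 + θ*(z - x)^2 - θ^2*γ*lam^2) ) / (2*θ*γ) := by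
          field_simp; ring
        rw [h]
        apply div_nonneg _ (by positivity)
        nlinarith [mul_nonneg (mul_nonneg hθ.le (sub_pos.2 hc2).le) (sub_nonneg.2 hzc),
          mul_nonneg (sub_pos.2 hγθ).le (sq_nonneg (|z| - θ*lam)),
          mul_nonneg hθ.le (sq_nonneg (x - θ*lam)),
          mul_le_mul_of_nonneg_left hsq hθ.le]
      · rw [mcp, if_neg (not_le.2 hzc)]
        nlinarith [mul_nonneg (by positivity : (0:ℝ) ≤ 1/(2*γ)) (sq_nonneg (z - x))]

lemma mcp_neg (lam θ z : ℝ) : mcp lam θ (-z) = mcp lam θ z := by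
  simp [mcp, abs_neg, neg_sq]

lemma mcpProx_neg (lam θ γ x : ℝ) : mcpProx lam θ γ (-x) = -(mcpProx lam θ γ x) := by
  rw [mcpProx, mcpProx, abs_neg, Real.sign_neg]
  split_ifs with h1 h2
  · simp
  · ring
  · rfl

lemma mcp_prox_min (lam θ γ x : ℝ) (hlam : 0 < lam) (hθ : 0 < θ)
    (hγ : 0 < γ) (hγθ : γ < θ) (z : ℝ) :
    mcp lam θ (mcpProx lam θ γ x) + 1 / (2 * γ) * (mcpProx lam θ γ x - x) ^ 2
      ≤ mcp lam θ z + 1 / (2 * γ) * (z - x) ^ 2 := by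
  rcases le_or_gt 0 x with hx | hx
  · exact mcp_prox_min_nonneg lam θ γ x hlam hθ hγ hγθ hx z
  · have h := mcp_prox_min_nonneg lam θ γ (-x) hlam hθ hγ hγθ (by linarith) (-z)
    rw [mcpProx_neg, mcp_neg, mcp_neg,
      (by ring : (-(mcpProx lam θ γ x) - -x)^2 = (mcpProx lam θ γ x - x)^2),
      (by ring : (-z - -x)^2 = (z - x)^2)] at h
    exact h

lemma mcp_prox_uniq (lam θ γ x : ℝ) (hlam : 0 < lam) (hθ : 0 < θ)
    (hγ : 0 < γ) (hγθ : γ < θ) (w : ℝ)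
    (hw : ∀ z : ℝ, mcp lam θ w + 1 / (2 * γ) * (w - x) ^ 2
        ≤ mcp lam θ z + 1 / (2 * γ) * (z - x) ^ 2) :
    w = mcpProx lam θ γ x := by
  by_contra hne
  set p := mcpProx lam θ γ x with hp
  have hpmin := mcp_prox_min lam θ γ x hlam hθ hγ hγθ
  have h1 := hw p
  have h2 := hpmin w
  have h3 := hpmin ((1/2 : ℝ) * w + (1/2 : ℝ) * p)
  rw [← hp] at h2 h3
  have hconv := (mcp_convex lam θ hlam hθ).2 (mem_univ w) (mem_univ p)
    (by norm_num : (0:ℝ) ≤ 1/2) (by norm_num : (0:ℝ) ≤ 1/2) (by norm_num)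
  have hconv2 : mcp lam θ ((1/2:ℝ)*w+(1/2:ℝ)*p) + ((1/2:ℝ)*w+(1/2:ℝ)*p)^2/(2*θ)
      ≤ 1/2*(mcp lam θ w + w^2/(2*θ)) + 1/2*(mcp lam θ p + p^2/(2*θ)) := by
    simpa using hconv
  have hwp : 0 < (w - p)^2 :=
    lt_of_le_of_ne (sq_nonneg _) (Ne.symm (pow_ne_zero 2 (sub_ne_zero.2 hne)))
  have hiv : 1/(2*θ) < 1/(2*γ) := by
    rw [div_lt_div_iff₀ (by linarith) (by linarith)]; linarith
  have hγ0 : γ ≠ 0 := hγ.ne'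
  have hθ0 : θ ≠ 0 := hθ.ne'
  obtain ⟨c, hc⟩ : ∃ c : ℝ, c = 1/(2*γ) := ⟨_, rfl⟩
  obtain ⟨d, hd⟩ : ∃ d : ℝ, d = 1/(2*θ) := ⟨_, rfl⟩
  have hd' : ∀ u : ℝ, u^2/(2*θ) = d * u^2 := by intro u; rw [hd]; ring
  rw [← hc] at h1 h2 h3 hiv
  rw [hd' _, hd' _, hd' _] at hconv2
  nlinarith [h1, h2, h3, hconv2, mul_pos (sub_pos.2 hiv) hwp]

/-- the MCP is `θ⁻¹`-weakly convex, and for `0 < γ < θ` its proximal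
operator is given by the firm-thresholding formula: `mcpProx lam θ γ x` is the
unique minimizer of `z ↦ r_{λ,θ}(z) + (1/(2γ))(z - x)²`. -/
theorem mcp_weakly_convex_and_prox (lam θ : ℝ) (hlam : 0 < lam) (hθ : 0 < θ) :
    ConvexOn ℝ Set.univ (fun x => mcp lam θ x + x ^ 2 / (2 * θ)) ∧
      ∀ γ : ℝ, 0 < γ → γ < θ → ∀ x : ℝ,
        (∀ z : ℝ,
          mcp lam θ (mcpProx lam θ γ x) + 1 / (2 * γ) * (mcpProx lam θ γ x - x) ^ 2
            ≤ mcp lam θ z + 1 / (2 * γ) * (z - x) ^ 2) ∧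
        ∀ w : ℝ,
          (∀ z : ℝ, mcp lam θ w + 1 / (2 * γ) * (w - x) ^ 2
              ≤ mcp lam θ z + 1 / (2 * γ) * (z - x) ^ 2) →
            w = mcpProx lam θ γ x := by
  constructor
  · exact mcp_convex lam θ hlam hθ
  · intro γ hγ hγθ x
    exact ⟨mcp_prox_min lam θ γ x hlam hθ hγ hγθ,
      fun w hw => mcp_prox_uniq lam θ γ x hlam hθ hγ hγθ w hw⟩
end
end
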